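/- For all 1 ≤ k, ℓ ≤ n, one has D_k(h_ℓ) = δ_{k,ℓ} in ℚ[e_1, …, e_n] (i.e., D_ℓ(h_ℓ) = 1 and D_k(h_ℓ) = 0 for k ≠ ℓ). -/

import Mathlib

open MvPolynomial Finset

noncomputable def ee (K : Type) [CommRing K] (n : ℕ) : ℕ → MvPolynomial (Fin n) K
  | 0 => 1
  | (m + 1) => if h : m + 1 ≤ n then MvPolynomial.X ⟨m, by omega⟩ else 0

noncomputable def DD (K : Type) [CommRing K] (n : ℕ) (i : Fin n) :
    MvPolynomial (Fin n) K →ₗ[K] MvPolynomial (Fin n) K :=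
  ∑ j : Fin n, if i ≤ j then
    (LinearMap.mulLeft K (ee K n (j.val - i.val))).comp (MvPolynomial.pderiv j).toLinearMap
  else 0

/-- Newton's recursion: `s_{ℓ} = (−1)^{ℓ−1} ℓ e_ℓ + ∑_{j=1}^{ℓ−1} (−1)^{j−1} e_j s_{ℓ−j}`. -/
noncomputable def ss (n : ℕ) : ℕ → MvPolynomial (Fin n) ℚ
  | 0 => 0
  | (ℓ + 1) =>
    ((-1 : ℚ) ^ ℓ * ((ℓ : ℚ) + 1)) • ee ℚ n (ℓ + 1) +
      ∑ j ∈ Finset.range ℓ, ((-1 : ℚ) ^ j) • (ee ℚ n (j + 1) * ss n (ℓ - j))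
decreasing_by omega

/-- `h_ℓ = (−1)^{ℓ−1} s_ℓ / ℓ`, with `ℓ = i + 1`. -/
noncomputable def hh (n : ℕ) (i : Fin n) : MvPolynomial (Fin n) ℚ :=
  ((-1 : ℚ) ^ (i : ℕ) / ((i : ℕ) + 1)) • ss n ((i : ℕ) + 1)

lemma DD_apply (n : ℕ) (k : Fin n) (p : MvPolynomial (Fin n) ℚ) :
    DD ℚ n k p = ∑ j : Fin n, if k ≤ j then ee ℚ n (j.val - k.val) * pderiv j p else 0 := by
  rw [DD, LinearMap.sum_apply]
  refine Finset.sum_congr rfl fun j _ => ?_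
  split_ifs with h <;> simp

lemma DD_one (n : ℕ) (k : Fin n) : DD ℚ n k 1 = 0 := by
  simp [DD_apply]

lemma DD_mul (n : ℕ) (k : Fin n) (p q : MvPolynomial (Fin n) ℚ) :
    DD ℚ n k (p * q) = DD ℚ n k p * q + p * DD ℚ n k q := by
  simp only [DD_apply, pderiv_mul]
  rw [Finset.sum_mul, Finset.mul_sum, ← Finset.sum_add_distrib]
  refine Finset.sum_congr rfl fun j _ => ?_
  split_ifs with h <;> ring

lemma DD_X (n : ℕ) (k j : Fin n) :
    DD ℚ n k (X j) = if k ≤ j then ee ℚ n (j.val - k.val) else 0 := by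
  rw [DD_apply, Finset.sum_eq_single j]
  · split_ifs with h <;> simp
  · intro b _ hb
    have : pderiv b (X j : MvPolynomial (Fin n) ℚ) = 0 := by
      exact pderiv_X_of_ne hb.symm
    rw [this, mul_zero]
    split_ifs <;> rfl
  · simp

lemma DD_ee (n : ℕ) (k : Fin n) (m : ℕ) (hm : m ≤ n) :
    DD ℚ n k (ee ℚ n m) = if k.val + 1 ≤ m then ee ℚ n (m - (k.val + 1)) else 0 := by
  match m with
  | 0 => rw [if_neg (by omega)]; exact DD_one n k
  | (m + 1) =>
    rw [ee, dif_pos hm, DD_X]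
    simp only [Fin.val_mk]
    have hle : (k ≤ (⟨m, by omega⟩ : Fin n)) ↔ k.val + 1 ≤ m + 1 := by
      rw [Fin.le_def]; show k.val ≤ m ↔ _; omega
    by_cases h : k.val + 1 ≤ m + 1
    · rw [if_pos (hle.mpr h), if_pos h]
      congr 1
      omega
    · rw [if_neg (fun hh => h (hle.mp hh)), if_neg h]

lemma DD_ss (n : ℕ) : ∀ ℓ : ℕ, ℓ ≤ n → ∀ k : Fin n,
    DD ℚ n k (ss n ℓ) =
      if k.val + 1 = ℓ then ((-1:ℚ)^(ℓ-1) * ℓ) • (1 : MvPolynomial (Fin n) ℚ) else 0 := by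
  intro ℓ
  induction ℓ using Nat.strong_induction_on with
  | _ ℓ IH =>
    match ℓ with
    | 0 => intro _ k; simp [ss]
    | (l + 1) =>
      intro hl k
      rw [ss, map_add, map_smul, map_sum, DD_ee n k (l+1) hl]
      have hsum : ∀ j ∈ Finset.range l,
          DD ℚ n k (((-1:ℚ)^j) • (ee ℚ n (j+1) * ss n (l - j))) =
          ((-1:ℚ)^j) • ((if k.val + 1 ≤ j+1 then ee ℚ n (j+1-(k.val+1)) else 0) * ss n (l-j))
            + ((-1:ℚ)^j) • (ee ℚ n (j+1) *
              (if k.val+1 = l-j then ((-1:ℚ)^(l-j-1) * ((l-j : ℕ) : ℚ)) • 1 else 0)) := by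
        intro j hj
        rw [map_smul, DD_mul, DD_ee n k (j+1) (by simp at hj; omega),
          IH (l-j) (by simp at hj; omega) (by omega) k, smul_add]
      rw [Finset.sum_congr rfl hsum, Finset.sum_add_distrib]
      rcases lt_trichotomy (k.val + 1) (l+1) with hK | hK | hK
      · -- K ≤ l : everything cancels
        rw [if_neg (show ¬(k.val+1 = l+1) by omega), if_pos (show k.val+1 ≤ l+1 by omega)]
        obtain ⟨b, rfl⟩ : ∃ b, l = k.val + 1 + b := ⟨l - (k.val+1), by omega⟩
        set a := k.val with ha
        -- SumB collapse
        have hB : ∑ j ∈ Finset.range (a+1+b), ((-1:ℚ)^j) • (ee ℚ n (j+1) *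
              (if a+1 = a+1+b-j then ((-1:ℚ)^(a+1+b-j-1) * ((a+1+b-j : ℕ) : ℚ)) • 1 else 0))
            = ((-1:ℚ)^b * ((-1:ℚ)^a * ((a:ℚ)+1))) • ee ℚ n (b+1) := by
          rw [Finset.sum_eq_single b]
          · rw [if_pos (by omega), show a+1+b-b-1 = a from by omega,
              show a+1+b-b = a+1 from by omega]
            push_cast
            rw [mul_smul_comm, mul_one, smul_smul]
          · intro j hj hjb
            rw [if_neg (by simp at hj; omega), mul_zero, smul_zero]
          · intro h
            exact absurd (Finset.mem_range.mpr (by omega)) h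
        rw [hB]
        -- SumA
        have hA : ∑ j ∈ Finset.range (a+1+b), ((-1:ℚ)^j) •
              ((if a + 1 ≤ j+1 then ee ℚ n (j+1-(a+1)) else 0) * ss n (a+1+b-j))
            = ((-1:ℚ)^a) • ss n (b+1)
              + ((-1:ℚ)^(a+1)) • ∑ m ∈ Finset.range b,
                  ((-1:ℚ)^m) • (ee ℚ n (m+1) * ss n (b-m)) := by
          rw [Finset.range_eq_Ico,
            ← Finset.sum_Ico_consecutive _ (Nat.zero_le a) (show a ≤ a+1+b from by omega)]
          have h1 : ∑ j ∈ Finset.Ico 0 a, ((-1:ℚ)^j) •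
              ((if a + 1 ≤ j+1 then ee ℚ n (j+1-(a+1)) else 0) * ss n (a+1+b-j)) = 0 := by
            refine Finset.sum_eq_zero fun j hj => ?_
            simp only [Finset.mem_Ico] at hj
            rw [if_neg (by omega), zero_mul, smul_zero]
          rw [h1, zero_add, Finset.sum_Ico_eq_sum_range,
            show a+1+b-a = b+1 from by omega]
          have h2 : ∀ m ∈ Finset.range (b+1), ((-1:ℚ)^(a+m)) •
              ((if a + 1 ≤ a+m+1 then ee ℚ n (a+m+1-(a+1)) else 0) * ss n (a+1+b-(a+m)))
              = ((-1:ℚ)^(a+m)) • (ee ℚ n m * ss n (b+1-m)) := by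
            intro m hm
            rw [if_pos (by omega), show a+m+1-(a+1) = m from by omega,
              show a+1+b-(a+m) = b+1-m from by omega]
          rw [Finset.sum_congr rfl h2, Finset.sum_range_succ']
          have h3 : ∀ m ∈ Finset.range b, ((-1:ℚ)^(a+(m+1))) • (ee ℚ n (m+1) * ss n (b+1-(m+1)))
              = ((-1:ℚ)^(a+1)) • (((-1:ℚ)^m) • (ee ℚ n (m+1) * ss n (b-m))) := by
            intro m hm
            rw [smul_smul, ← pow_add, show b+1-(m+1) = b - m from by omega,
              show a+1+m = a+(m+1) from by omega]
          rw [Finset.sum_congr rfl h3, ← Finset.smul_sum,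
            show ee ℚ n 0 = 1 from rfl, one_mul, add_zero, add_comm, Nat.sub_zero]
        rw [hA]
        -- Newton for ss (b+1)
        have hN0 : ss n (b+1) = ((-1:ℚ)^b * ((b:ℚ)+1)) • ee ℚ n (b+1)
            + ∑ m ∈ Finset.range b, ((-1:ℚ)^m) • (ee ℚ n (m+1) * ss n (b-m)) := by
          rw [ss]
        have hN : ∑ m ∈ Finset.range b, ((-1:ℚ)^m) • (ee ℚ n (m+1) * ss n (b-m))
            = ss n (b+1) - ((-1:ℚ)^b * ((b:ℚ)+1)) • ee ℚ n (b+1) := by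
          rw [hN0, add_sub_cancel_left]
        rw [hN, show a+1+b+1-(a+1) = b+1 from by omega]
        push_cast
        have hsgn : ((-1:ℚ))^(a+1+b) = (-1:ℚ)^a * (-1:ℚ)^b * (-1) := by
          rw [pow_add, pow_add]; ring
        rw [hsgn]
        module
      · -- K = l+1
        rw [if_pos hK, if_pos (by omega)]
        have h0 : l + 1 - (k.val + 1) = 0 := by omega
        rw [h0]
        have hz1 : ∀ j ∈ Finset.range l,
            ((-1:ℚ)^j) • ((if k.val + 1 ≤ j+1 then ee ℚ n (j+1-(k.val+1)) else 0) * ss n (l-j))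
              = 0 := by
          intro j hj
          rw [if_neg (by simp at hj; omega), zero_mul, smul_zero]
        have hz2 : ∀ j ∈ Finset.range l,
            ((-1:ℚ)^j) • (ee ℚ n (j+1) *
              (if k.val+1 = l-j then ((-1:ℚ)^(l-j-1) * ((l-j : ℕ) : ℚ)) • 1 else 0)) = 0 := by
          intro j hj
          rw [if_neg (by simp at hj; omega), mul_zero, smul_zero]
        rw [Finset.sum_congr rfl hz1, Finset.sum_congr rfl hz2]
        simp only [Finset.sum_const_zero, add_zero]
        rw [ee]
        push_cast
        norm_num
      · -- K > l+1 : everything zero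
        rw [if_neg (by omega), if_neg (by omega), smul_zero]
        have hz1 : ∀ j ∈ Finset.range l,
            ((-1:ℚ)^j) • ((if k.val + 1 ≤ j+1 then ee ℚ n (j+1-(k.val+1)) else 0) * ss n (l-j))
              = 0 := by
          intro j hj
          rw [if_neg (by simp at hj; omega), zero_mul, smul_zero]
        have hz2 : ∀ j ∈ Finset.range l,
            ((-1:ℚ)^j) • (ee ℚ n (j+1) *
              (if k.val+1 = l-j then ((-1:ℚ)^(l-j-1) * ((l-j : ℕ) : ℚ)) • 1 else 0)) = 0 := by
          intro j hj
          rw [if_neg (by simp at hj; omega), mul_zero, smul_zero]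
        rw [Finset.sum_congr rfl hz1, Finset.sum_congr rfl hz2]
        simp

theorem stmt2 (n : ℕ) (hn : 1 ≤ n) (k l : Fin n) :
    DD ℚ n k (hh n l) = if k = l then 1 else 0 := by
  rw [hh, map_smul, DD_ss n (l.val+1) (by omega) k]
  by_cases h : k = l
  · rw [if_pos (by omega : k.val + 1 = l.val + 1), if_pos h, smul_smul,
      show (l.val : ℕ) + 1 - 1 = l.val from by omega]
    have : ((-1:ℚ) ^ (l.val) / ((l.val:ℚ) + 1)) * ((-1:ℚ) ^ (l.val) * ((l.val+1 : ℕ) : ℚ)) = 1 := by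
      push_cast
      have h1 : ((l.val : ℚ) + 1) ≠ 0 := by positivity
      field_simp
      rw [← pow_mul, mul_comm, pow_mul, neg_one_sq, one_pow]
    rw [this, one_smul]
  · rw [if_neg (show ¬(k.val + 1 = l.val + 1) from fun hh => h (Fin.ext (by omega))),
      if_neg h, smul_zero]
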